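/- arXiv:2312.17252 — 2 statements merged into one kernel-verified Lean document; each statement's English description precedes it below -/
import Mathlib

section
/- The number of Sylow 7-subgroups of PSL(2,8) is 36, and the normalizer of a Sylow 7-subgroup of PSL(2,8) has order 14 and is a dihedral group. -/
set_option maxHeartbeats 4000000

def F8 : Type := ZMod 2 × ZMod 2 × ZMod 2

namespace F8
instance : DecidableEq F8 := inferInstanceAs (DecidableEq (ZMod 2 × ZMod 2 × ZMod 2))
instance : Fintype F8 := inferInstanceAs (Fintype (ZMod 2 × ZMod 2 × ZMod 2))

instance : Zero F8 := ⟨((0:ZMod 2),(0:ZMod 2),(0:ZMod 2))⟩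
instance : One F8 := ⟨((1:ZMod 2),(0:ZMod 2),(0:ZMod 2))⟩
instance : Add F8 := ⟨fun a b => (a.1+b.1, a.2.1+b.2.1, a.2.2+b.2.2)⟩
instance : Mul F8 := ⟨fun a b =>
  (a.1*b.1 + a.2.1*b.2.2 + a.2.2*b.2.1,
   a.1*b.2.1 + a.2.1*b.1 + a.2.1*b.2.2 + a.2.2*b.2.1 + a.2.2*b.2.2,
   a.1*b.2.2 + a.2.1*b.2.1 + a.2.2*b.1 + a.2.2*b.2.2)⟩
instance : Neg F8 := ⟨id⟩
instance : Inv F8 := ⟨fun x => (x*x) * ((x*x)*(x*x))⟩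

instance : CommRing F8 where
  add_assoc := by decide
  zero_add := by decide
  add_zero := by decide
  add_comm := by decide
  mul_assoc := by decide
  one_mul := by decide
  mul_one := by decide
  left_distrib := by decide
  right_distrib := by decide
  zero_mul := by decide
  mul_zero := by decide
  mul_comm := by decide
  neg_add_cancel := by decide
  nsmul := nsmulRec
  zsmul := zsmulRec

instance : Field F8 where
  exists_pair_ne := ⟨0, 1, by decide⟩
  mul_inv_cancel := by decide
  inv_zero := by decide
  nnqsmul := _
  qsmul := _

example : Fintype.card F8 = 8 := by decide
end F8

set_option maxRecDepth 100000
set_option maxHeartbeats 4000000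

abbrev Gm := Matrix.SpecialLinearGroup (Fin 2) F8
instance : DecidableEq Gm := inferInstanceAs (DecidableEq {A : Matrix (Fin 2) (Fin 2) F8 // A.det = 1})
instance : Fact (Nat.Prime 7) := ⟨by norm_num⟩

def gg : F8 := ((0:ZMod 2),(1:ZMod 2),(0:ZMod 2))
def dd : Gm := ⟨!![gg, 0; 0, gg⁻¹], by decide⟩
def ss : Gm := ⟨!![0, 1; 1, 0], by decide⟩
def EE : Gm := ⟨!![1, 1; 0, 1], by decide⟩
lemma hd7 : dd ^ 7 = 1 := by decide
lemma hdne : dd ≠ 1 := by decide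
lemma hss : ss * ss = 1 := by decide
lemma hsne : ss ≠ 1 := by decide
lemma hsds : ss * dd * ss⁻¹ = dd⁻¹ := by decide
lemma hEE : dd * (EE * dd * EE⁻¹) ≠ (EE * dd * EE⁻¹) * dd := by decide

lemma horder : orderOf dd = 7 := orderOf_eq_prime hd7 hdne

lemma hGmcard : Nat.card Gm = 504 := by
  rw [Nat.card_eq_fintype_card]; decide

def P0 : Subgroup Gm := Subgroup.zpowers dd

lemma hP0card : Nat.card P0 = 7 := by
  rw [P0, Nat.card_zpowers, horder]

lemma hfact : (Nat.card Gm).factorization 7 = 1 := by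
  rw [hGmcard, show (504:ℕ) = 7 * 72 by norm_num,
    Nat.factorization_mul (by norm_num) (by norm_num), Finsupp.add_apply,
    Nat.Prime.factorization_self (by norm_num),
    Nat.factorization_eq_zero_of_not_dvd (by norm_num)]

def P0syl : Sylow 7 Gm := Sylow.ofCard P0 (by rw [hP0card, hfact, pow_one])

lemma P0syl_coe : (P0syl : Subgroup Gm) = P0 := rfl

def NN : Subgroup Gm := Subgroup.normalizer (P0 : Set Gm)

lemma ssinv : ss⁻¹ = ss := inv_eq_of_mul_eq_one_right hss

lemma d_mem : dd ∈ NN := Subgroup.le_normalizer (Subgroup.mem_zpowers dd)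

lemma sconj_zpow (k : ℤ) : ss * dd ^ k * ss⁻¹ = (dd ^ k)⁻¹ := by
  have h := map_zpow (MulAut.conj ss) dd k
  simp only [MulAut.conj_apply] at h
  rw [h, hsds, inv_zpow]

lemma s_mem : ss ∈ NN := by
  apply Subgroup.mem_normalizer_fintype
  intro n hn
  obtain ⟨k, rfl⟩ := Subgroup.mem_zpowers_iff.mp hn
  rw [sconj_zpow]
  exact inv_mem (Subgroup.zpow_mem _ (Subgroup.mem_zpowers dd) k)

def D : ZMod 7 → Gm := fun i => dd ^ i.val

lemma hDadd (i j : ZMod 7) : D (i + j) = D i * D j := by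
  unfold D
  have h := pow_mod_orderOf dd (i.val + j.val)
  rw [horder] at h
  rw [← pow_add, ZMod.val_add, h]

lemma hD0 : D 0 = 1 := by simp [D]

lemma hDneg (i : ZMod 7) : D (-i) = (D i)⁻¹ := by
  apply eq_inv_of_mul_eq_one_left
  rw [← hDadd, neg_add_cancel, hD0]

lemma hconj (i : ZMod 7) : ss * D i * ss⁻¹ = D (-i) := by
  rw [hDneg]
  unfold D
  have h := map_pow (MulAut.conj ss) dd i.val
  simp only [MulAut.conj_apply] at h
  rw [h, hsds, inv_pow]

lemma hDs (i : ZMod 7) : D i * ss = ss * D (-i) := by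
  rw [← hconj, ssinv, ← mul_assoc, ← mul_assoc, hss, one_mul]

def fD : DihedralGroup 7 →* Gm :=
  MonoidHom.mk' (fun x => match x with
    | DihedralGroup.r i => D i
    | DihedralGroup.sr i => ss * D i) (by
      rintro (i | i) (j | j)
      · show D (i + j) = D i * D j
        exact hDadd i j
      · show ss * D (j - i) = D i * (ss * D j)
        rw [← mul_assoc, hDs, mul_assoc, ← hDadd, neg_add_eq_sub]
      · show ss * D (i + j) = ss * D i * D j
        rw [mul_assoc, hDadd]
      · show D (j - i) = ss * D i * (ss * D j)
        rw [mul_assoc, ← mul_assoc (D i) ss (D j), hDs, mul_assoc, ← mul_assoc, hss, one_mul,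
          ← hDadd, neg_add_eq_sub])

lemma fD_inj : Function.Injective fD := by
  rw [injective_iff_map_eq_one]
  rintro (i | i) h
  · have hD : dd ^ i.val = 1 := h
    have h7 : (7 : ℕ) ∣ i.val := by
      have h := orderOf_dvd_of_pow_eq_one hD
      rwa [horder] at h
    have hv : i.val = 0 := Nat.eq_zero_of_dvd_of_lt h7 (ZMod.val_lt i)
    have : i = 0 := (ZMod.val_eq_zero i).mp hv
    rw [this]
    exact DihedralGroup.one_def.symm
  · exfalso
    have h1 : ss = (D i)⁻¹ := eq_inv_of_mul_eq_one_left h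
    have hD7 : (D i) ^ 7 = 1 := by
      unfold D
      rw [← pow_mul, mul_comm, pow_mul, hd7, one_pow]
    have h2 : ss ^ 7 = 1 := by rw [h1, inv_pow, hD7, inv_one]
    have hsq : ss ^ 2 = 1 := by rw [pow_two]; exact hss
    have h3 : ss ^ 7 = ss := by
      have : ss ^ 7 = (ss ^ 2) ^ 3 * ss := by rw [← pow_mul, ← pow_succ]
      rw [this, hsq, one_pow, one_mul]
    exact hsne (h3 ▸ h2)

lemma fD_mem_NN : ∀ x, fD x ∈ NN := by
  rintro (i | i)
  · exact pow_mem d_mem i.val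
  · exact mul_mem s_mem (pow_mem d_mem i.val)

lemma card_dihedral : Nat.card (DihedralGroup 7) = 14 := by
  rw [DihedralGroup.nat_card]

lemma hrange_card : Nat.card fD.range = 14 := by
  rw [← card_dihedral]
  apply Nat.card_congr
  exact ((Equiv.ofInjective fD fD_inj).trans (Equiv.setCongr (by rw [MonoidHom.coe_range]))).symm

lemma hrange_le : fD.range ≤ NN := by
  rintro x ⟨y, rfl⟩
  exact fD_mem_NN y

lemma h14dvd : 14 ∣ Nat.card NN := by
  rw [← hrange_card]
  exact Subgroup.card_dvd_of_le hrange_le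

lemma hmulindex : Nat.card NN * NN.index = 504 := by
  rw [Subgroup.card_mul_index, hGmcard]

lemma hmod7 : NN.index % 7 = 1 := by
  have h := card_sylow_modEq_one 7 Gm
  rw [Sylow.card_eq_index_normalizer P0syl] at h
  have : Subgroup.normalizer (P0syl : Set Gm) = NN := rfl
  rw [this] at h
  simpa [Nat.ModEq] using h

lemma hindex_ne_one : NN.index ≠ 1 := by
  intro h
  have hN : NN = ⊤ := Subgroup.index_eq_one.mp h
  have hE : EE ∈ NN := hN ▸ Subgroup.mem_top EE
  have := (Subgroup.mem_normalizer_iff.mp hE dd).mp (Subgroup.mem_zpowers dd)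
  obtain ⟨k, hk⟩ := Subgroup.mem_zpowers_iff.mp this
  apply hEE
  rw [← hk]
  exact ((Commute.refl dd).zpow_right k)

lemma hindex36 : NN.index = 36 := by
  obtain ⟨m, hm⟩ := h14dvd
  have hmi := hmulindex
  have hprod : 14 * (m * NN.index) = 504 := by rw [← mul_assoc, ← hm]; exact hmi
  have hm36 : m * NN.index = 36 := by omega
  have h36 : NN.index ∣ 36 := Dvd.intro_left m hm36
  have hle : NN.index ≤ 36 := Nat.le_of_dvd (by norm_num) h36
  have hpos : 0 < NN.index := by
    rcases Nat.eq_zero_or_pos NN.index with h0 | h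
    · rw [h0, mul_zero] at hmi; norm_num at hmi
    · exact h
  have hm7 := hmod7
  have hne1 := hindex_ne_one
  interval_cases NN.index <;> omega

lemma hNNcard : Nat.card NN = 14 := by
  have := hmulindex
  rw [hindex36] at this
  omega

theorem model_n7 : Nat.card (Sylow 7 Gm) = 36 := by
  rw [Sylow.card_eq_index_normalizer P0syl]
  exact hindex36

def fD' : DihedralGroup 7 →* NN := fD.codRestrict NN fD_mem_NN

lemma fD'_bij : Function.Bijective fD' := by
  have hinj : Function.Injective fD' := by
    intro a b hab
    apply fD_inj
    exact congrArg Subtype.val hab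
  refine (Nat.bijective_iff_injective_and_card fD').mpr ⟨hinj, ?_⟩
  rw [card_dihedral, hNNcard]

noncomputable def isoNN : NN ≃* DihedralGroup 7 := (MulEquiv.ofBijective fD' fD'_bij).symm

theorem model_norm (Q : Sylow 7 Gm) :
    Nat.card (Subgroup.normalizer ((Q : Subgroup Gm) : Set Gm)) = 14 ∧
      Nonempty (Subgroup.normalizer ((Q : Subgroup Gm) : Set Gm) ≃* DihedralGroup 7) := by
  have hidx : (Subgroup.normalizer ((Q : Subgroup Gm) : Set Gm)).index = 36 := by
    exact (Sylow.card_eq_index_normalizer Q).symm.trans model_n7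
  constructor
  · have h := Subgroup.card_mul_index (Subgroup.normalizer ((Q : Subgroup Gm) : Set Gm))
    rw [hidx, hGmcard] at h
    omega
  · obtain ⟨g, hg⟩ := MulAction.exists_smul_eq Gm P0syl Q
    have hQ : (Q : Subgroup Gm) = P0.map (MulAut.conj g).toMonoidHom := by
      rw [← hg, Sylow.coe_subgroup_smul]
      rfl
    have hnorm : Subgroup.normalizer ((Q : Subgroup Gm) : Set Gm) = NN.map (MulAut.conj g).toMonoidHom := by
      rw [hQ, ← Subgroup.map_equiv_normalizer_eq P0 (MulAut.conj g)]
      rfl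
    refine ⟨?_⟩
    rw [hnorm]
    exact ((Subgroup.equivMapOfInjective NN (MulAut.conj g).toMonoidHom
      (MulAut.conj g).injective).symm.trans isoNN)


open Matrix

section SylowEquiv

variable {G : Type*} {H : Type*} [Group G] [Group H] {p : ℕ}

/-- Transport a Sylow subgroup along a group isomorphism. -/
def sylowMap (e : G ≃* H) (P : Sylow p G) : Sylow p H where
  toSubgroup := P.1.map e.toMonoidHom
  isPGroup' := P.2.map e.toMonoidHom
  is_maximal' := by
    intro Q hQ hle
    have hcomap : P.1 ≤ Q.comap e.toMonoidHom := fun x hx =>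
      Subgroup.mem_comap.mpr (hle (Subgroup.mem_map_of_mem _ hx))
    have hQp : IsPGroup p (Q.comap e.toMonoidHom) :=
      IsPGroup.comap_of_injective hQ e.toMonoidHom e.injective
    have heq := P.3 hQp hcomap
    rw [← heq, Subgroup.map_comap_eq_self_of_surjective e.surjective]

lemma sylowMap_symm (e : G ≃* H) (P : Sylow p G) :
    sylowMap e.symm (sylowMap e P) = P := by
  apply Sylow.ext
  show (P.1.map e.toMonoidHom).map e.symm.toMonoidHom = P.1
  rw [Subgroup.map_map]
  convert Subgroup.map_id P.1
  ext x
  simp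

/-- Transporting Sylow subgroups along a group isomorphism is an equivalence. -/
def sylowMapEquiv (e : G ≃* H) : Sylow p G ≃ Sylow p H where
  toFun := sylowMap e
  invFun := sylowMap e.symm
  left_inv P := sylowMap_symm e P
  right_inv Q := by
    have h := sylowMap_symm e.symm Q
    rwa [MulEquiv.symm_symm] at h

lemma sylowMap_normalizer (e : G ≃* H) (P : Sylow p G) :
    Subgroup.normalizer ((sylowMap e P : Subgroup H) : Set H) = (Subgroup.normalizer (P.1 : Set G)).map e.toMonoidHom :=
  (Subgroup.map_equiv_normalizer_eq P.1 e).symm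

end SylowEquiv

section PSLTransfer

abbrev K8 := GaloisField 2 3

noncomputable instance : Fintype K8 := Fintype.ofFinite K8

lemma K8card : Fintype.card K8 = 8 := by
  have h := GaloisField.card 2 3 (by norm_num)
  rw [Nat.card_eq_fintype_card] at h
  simpa using h

lemma F8card : Fintype.card F8 = 8 := by decide

noncomputable def eK : K8 ≃+* F8 :=
  FiniteField.ringEquivOfCardEq (by rw [K8card, F8card])

/-- The induced isomorphism of special linear groups. -/
noncomputable def eSL : Matrix.SpecialLinearGroup (Fin 2) K8 ≃* Gm where
  toFun := Matrix.SpecialLinearGroup.map (eK : K8 →+* F8)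
  invFun := Matrix.SpecialLinearGroup.map (eK.symm : F8 →+* K8)
  left_inv A := by
    ext i j
    change eK.symm (eK ((A : Matrix (Fin 2) (Fin 2) K8) i j)) = _
    simp [Matrix.SpecialLinearGroup.map]
  right_inv A := by
    ext i j
    change eK (eK.symm ((A : Matrix (Fin 2) (Fin 2) F8) i j)) = _
    simp [Matrix.SpecialLinearGroup.map]
  map_mul' := map_mul _

lemma center_eq_bot :
    Subgroup.center (Matrix.SpecialLinearGroup (Fin 2) K8) = ⊥ := by
  rw [eq_bot_iff]
  intro A hA
  obtain ⟨r, hr, hscalar⟩ := Matrix.SpecialLinearGroup.mem_center_iff.mp hA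
  have hr2 : r ^ 2 = 1 := by simpa using hr
  have h2 : r + r = 0 := CharTwo.add_self_eq_zero r
  have h11 : (1 : K8) + 1 = 0 := CharTwo.add_self_eq_zero 1
  have h0 : (r + 1) ^ 2 = 0 := by linear_combination hr2 + h2 + h11
  have hadd : r + 1 = 0 := by
    exact (pow_eq_zero_iff (n := 2) (by norm_num)).mp h0
  have hr1 : r = 1 := by
    have : r = -1 := eq_neg_of_add_eq_zero_left hadd
    rw [this, CharTwo.neg_eq]
  rw [Subgroup.mem_bot]
  apply Subtype.ext
  rw [← hscalar, hr1]
  simp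

noncomputable def ePSL :
    Matrix.ProjectiveSpecialLinearGroup (Fin 2) K8 ≃* Matrix.SpecialLinearGroup (Fin 2) K8 :=
  (QuotientGroup.quotientMulEquivOfEq center_eq_bot).trans QuotientGroup.quotientBot

noncomputable def eG : Matrix.ProjectiveSpecialLinearGroup (Fin 2) K8 ≃* Gm :=
  ePSL.trans eSL

end PSLTransfer

theorem sylow_seven_psl_2_8 :
    Nat.card (Sylow 7 (Matrix.ProjectiveSpecialLinearGroup (Fin 2) (GaloisField 2 3))) = 36 ∧
    ∀ P : Sylow 7 (Matrix.ProjectiveSpecialLinearGroup (Fin 2) (GaloisField 2 3)),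
      Nat.card
        (Subgroup.normalizer ((P : Subgroup (Matrix.ProjectiveSpecialLinearGroup (Fin 2) (GaloisField 2 3))) : Set (Matrix.ProjectiveSpecialLinearGroup (Fin 2) (GaloisField 2 3)))) = 14 ∧
      Nonempty
        ((Subgroup.normalizer ((P : Subgroup (Matrix.ProjectiveSpecialLinearGroup (Fin 2) (GaloisField 2 3))) : Set (Matrix.ProjectiveSpecialLinearGroup (Fin 2) (GaloisField 2 3))))
          ≃* DihedralGroup 7) := by
  constructor
  · have he : Sylow 7 (Matrix.ProjectiveSpecialLinearGroup (Fin 2) K8) ≃ Sylow 7 Gm :=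
      sylowMapEquiv eG
    exact (Nat.card_congr he).trans model_n7
  · intro P
    have hnorm := sylowMap_normalizer eG P
    have hres := model_norm (sylowMap eG P)
    have hiso : Subgroup.normalizer ((P : Subgroup (Matrix.ProjectiveSpecialLinearGroup (Fin 2) K8)) : Set (Matrix.ProjectiveSpecialLinearGroup (Fin 2) K8)) ≃* Subgroup.normalizer ((sylowMap eG P : Subgroup Gm) : Set Gm) := by
      rw [hnorm]
      exact Subgroup.equivMapOfInjective _ eG.toMonoidHom eG.injective
    constructor
    · rw [Nat.card_congr hiso.toEquiv]
      exact hres.1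
    · obtain ⟨j⟩ := hres.2
      exact ⟨hiso.trans j⟩
end

section
/- Let G be a group generated by a subgroup H of order 56 isomorphic to 2^3:7 (elementary abelian of order 8 extended by a fixed-point-freely acting element of order 7) together with an involution t inverting the order-7 element. If G is isomorphic to PSL(2,8), then there exists an involution m in the elementary abelian subgroup 2^3 of H such that mt has order 3. -/
section CardFacts
open Matrix

lemma card_SL28 : Nat.card (Matrix.SpecialLinearGroup (Fin 2) (GaloisField 2 3)) = 504 := by
  set F := GaloisField 2 3 with hF
  haveI : Fintype F := Fintype.ofFinite F
  have hq : Fintype.card F = 8 := by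
    rw [← Nat.card_eq_fintype_card]
    have := GaloisField.card 2 3 (by norm_num)
    simpa using this
  have hGL : Nat.card (GL (Fin 2) F) = 3528 := by
    rw [Matrix.card_GL_field, hq]
    norm_num [Fin.prod_univ_two]
  have hdetsurj : Function.Surjective (Matrix.GeneralLinearGroup.det (n := Fin 2) (R := F)) := by
    intro u
    refine ⟨⟨Matrix.diagonal ![(u:F), 1], Matrix.diagonal ![((u⁻¹:Fˣ):F), 1], ?_, ?_⟩, ?_⟩
    · rw [Matrix.diagonal_mul_diagonal]
      ext i j
      fin_cases i <;> fin_cases j <;> simp [Matrix.diagonal]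
    · rw [Matrix.diagonal_mul_diagonal]
      ext i j
      fin_cases i <;> fin_cases j <;> simp [Matrix.diagonal]
    · ext
      rw [Matrix.GeneralLinearGroup.val_det_apply]
      simp [Matrix.det_diagonal]
  have e : Matrix.SpecialLinearGroup (Fin 2) F ≃
      (Matrix.GeneralLinearGroup.det (n := Fin 2) (R := F)).ker := by
    refine ⟨fun A => ⟨Matrix.SpecialLinearGroup.toGL A, ?_⟩, fun B => ⟨B.1.val, ?_⟩, ?_, ?_⟩
    · exact Matrix.SpecialLinearGroup.coeToGL_det A
    · have h2 := MonoidHom.mem_ker.mp B.2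
      have := congrArg (Units.val) h2
      rwa [Matrix.GeneralLinearGroup.val_det_apply] at this
    · intro A; exact Subtype.ext rfl
    · intro B; exact Subtype.ext (Units.ext rfl)
  have hker : Nat.card (Matrix.GeneralLinearGroup.det (n := Fin 2) (R := F)).ker * 7 = 3528 := by
    have h1 := Subgroup.card_mul_index (Matrix.GeneralLinearGroup.det (n := Fin 2) (R := F)).ker
    have h2 : (Matrix.GeneralLinearGroup.det (n := Fin 2) (R := F)).ker.index = 7 := by
      have e2 := QuotientGroup.quotientKerEquivOfSurjective _ hdetsurj
      have hidx : (Matrix.GeneralLinearGroup.det (n := Fin 2) (R := F)).ker.index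
          = Nat.card Fˣ := by
        rw [Subgroup.index, Nat.card_congr e2.toEquiv]
      rw [hidx, Nat.card_units, ← Nat.card_eq_fintype_card] at *
      omega
    rw [h2] at h1; rw [h1, hGL]
  rw [Nat.card_congr e]
  omega

lemma card_PSL28 : Nat.card (Matrix.ProjectiveSpecialLinearGroup (Fin 2) (GaloisField 2 3)) = 504 := by
  set F := GaloisField 2 3 with hF
  haveI : Fintype F := Fintype.ofFinite F
  have hq : Fintype.card F = 8 := by
    rw [← Nat.card_eq_fintype_card]
    have := GaloisField.card 2 3 (by norm_num)
    simpa using this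
  have hcenter : Subgroup.center (Matrix.SpecialLinearGroup (Fin 2) F) = ⊥ := by
    rw [eq_bot_iff]
    intro A hA
    obtain ⟨r, hr, hrA⟩ := Matrix.SpecialLinearGroup.mem_center_iff.mp hA
    rw [Fintype.card_fin] at hr
    have hr0 : r ≠ 0 := by rintro rfl; simp at hr
    have h7 : r ^ 7 = 1 := by
      have := FiniteField.pow_card_sub_one_eq_one r hr0
      rwa [hq] at this
    have h1 : r = 1 := by
      have d2 := orderOf_dvd_of_pow_eq_one hr
      have d7 := orderOf_dvd_of_pow_eq_one h7
      have hd : orderOf r ∣ 1 := by simpa using Nat.dvd_gcd d2 d7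
      exact orderOf_eq_one_iff.mp (Nat.dvd_one.mp hd)
    rw [Subgroup.mem_bot]
    apply Subtype.ext
    rw [← hrA, h1]
    simp
  have : Nat.card (Matrix.ProjectiveSpecialLinearGroup (Fin 2) F)
      = (Subgroup.center (Matrix.SpecialLinearGroup (Fin 2) F)).index := rfl
  rw [this, hcenter]
  have h1 := Subgroup.card_mul_index (⊥ : Subgroup (Matrix.SpecialLinearGroup (Fin 2) F))
  rw [card_SL28] at h1
  simpa using h1

end CardFacts

lemma aux_mem_normalizer {G : Type*} [Group G] [Finite G] (E : Subgroup G) (a : G)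
    (ha : ∀ x ∈ E, a * x * a⁻¹ ∈ E) : a ∈ Subgroup.normalizer (E : Set G) := by
  have hle : E.map (MulAut.conj a).toMonoidHom ≤ E := by
    rintro _ ⟨x, hx, rfl⟩
    simpa [MulAut.conj_apply] using ha x hx
  have hcard : Nat.card E ≤ Nat.card (E.map (MulAut.conj a).toMonoidHom) :=
    le_of_eq (Nat.card_congr (E.equivMapOfInjective _ (MulAut.conj a).injective).toEquiv)
  have heq : E.map (MulAut.conj a).toMonoidHom = E := Subgroup.eq_of_le_of_card_ge hle hcard
  rw [Subgroup.mem_normalizer_iff]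
  intro x
  refine ⟨fun hx => ha x hx, fun hx => ?_⟩
  rw [← heq] at hx
  obtain ⟨y, hy, hxy⟩ := hx
  simp only [MulEquiv.coe_toMonoidHom, MulAut.conj_apply] at hxy
  exact (mul_left_cancel (mul_right_cancel hxy) : y = x) ▸ hy

lemma aux_conj_eq_one {G : Type*} [Group G] (g : G) (c : ℤ) (x : G)
    (h : g ^ c * x * g ^ (-c) = 1) : x = 1 := by
  have h2 : x = g ^ (-c) * (g ^ c * x * g ^ (-c)) * g ^ c := by group
  rw [h] at h2
  simpa using h2

theorem abstract_main
    (G : Type*) [Group G] (E : Subgroup G) (g t : G)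
    (hEcard : Nat.card E = 8)
    (hEelem : ∀ x ∈ E, x * x = 1)
    (hg : orderOf g = 7)
    (hnorm : ∀ x ∈ E, g * x * g⁻¹ ∈ E)
    (hfpf : ∀ x ∈ E, g * x * g⁻¹ = x → x = 1)
    (ht2 : t * t = 1) (ht1 : t ≠ 1)
    (hinv : t * g * t⁻¹ = g⁻¹)
    (hgen : Subgroup.closure ((E : Set G) ∪ {g, t}) = ⊤)
    (hGcard : Nat.card G = 504) :
    ∃ m ∈ E, m ≠ 1 ∧ m * m = 1 ∧ orderOf (m * t) = 3 := by
  haveI hfin : Finite G := Nat.finite_of_card_ne_zero (by rw [hGcard]; norm_num)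
  have htinv : t⁻¹ = t := inv_eq_of_mul_eq_one_left ht2
  have hEinv : ∀ x ∈ E, x⁻¹ = x := fun x hx => inv_eq_of_mul_eq_one_left (hEelem x hx)
  have hEcomm : ∀ x ∈ E, ∀ y ∈ E, x * y = y * x := by
    intro x hx y hy
    have h1 : (x * y)⁻¹ = x * y := hEinv _ (E.mul_mem hx hy)
    rw [mul_inv_rev, hEinv x hx, hEinv y hy] at h1
    exact h1.symm
  -- normalizer facts
  have hgnorm : g ∈ Subgroup.normalizer (E : Set G) := aux_mem_normalizer E g hnorm
  have hzpow_mem : ∀ k : ℤ, g ^ k ∈ Subgroup.normalizer (E : Set G) := fun k => Subgroup.zpow_mem _ hgnorm k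
  have hzconj : ∀ (k : ℤ), ∀ x ∈ E, g ^ k * x * g ^ (-k) ∈ E := by
    intro k x hx
    have := (Subgroup.mem_normalizer_iff.mp (hzpow_mem k) x).mp hx
    simpa [zpow_neg] using this
  -- E ∩ <g> = 1
  have hEzpow : ∀ x, x ∈ E → x ∈ Subgroup.zpowers g → x = 1 := by
    intro x hxE hxg
    have h8 : x ^ (8 : ℕ) = 1 := by
      have h := pow_card_eq_one' (G := E) (x := ⟨x, hxE⟩)
      rw [hEcard] at h
      have := congrArg (Subtype.val) h
      simpa using this
    have d8 := orderOf_dvd_of_pow_eq_one h8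
    have d7 : orderOf x ∣ 7 := hg ▸ orderOf_dvd_of_mem_zpowers hxg
    have hd := Nat.dvd_gcd d8 d7
    norm_num at hd
    exact hd
  have hgpow7 : g ^ (7 : ℤ) = 1 := by
    have : g ^ (7 : ℕ) = 1 := by rw [← hg]; exact pow_orderOf_eq_one g
    exact_mod_cast this
  -- the subgroup H = E <g>
  set H : Subgroup G := {
    carrier := {x | ∃ e ∈ E, ∃ k : ℤ, x = e * g ^ k}
    one_mem' := ⟨1, E.one_mem, 0, by simp⟩
    mul_mem' := by
      rintro a b ⟨e1, he1, k1, rfl⟩ ⟨e2, he2, k2, rfl⟩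
      refine ⟨e1 * (g ^ k1 * e2 * g ^ (-k1)), E.mul_mem he1 (hzconj k1 e2 he2), k1 + k2, ?_⟩
      group
    inv_mem' := by
      rintro a ⟨e, he, k, rfl⟩
      refine ⟨g ^ (-k) * e⁻¹ * g ^ (-(-k)), hzconj (-k) e⁻¹ (E.inv_mem he), -k, ?_⟩
      group } with hH
  have hmemH : ∀ x : G, x ∈ H ↔ ∃ e ∈ E, ∃ k : ℤ, x = e * g ^ k := fun x => Iff.rfl
  have hEleH : ∀ e ∈ E, e ∈ H := fun e he => ⟨e, he, 0, by simp⟩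
  have hHcard : Nat.card H = 56 := by
    have hf : Function.Bijective (fun p : E × Subgroup.zpowers g =>
        (⟨(p.1 : G) * (p.2 : G), by
          obtain ⟨k, hk⟩ := Subgroup.mem_zpowers_iff.mp p.2.2
          exact ⟨p.1, p.1.2, k, by rw [hk]⟩⟩ : H)) := by
      constructor
      · rintro ⟨e1, z1⟩ ⟨e2, z2⟩ hp
        have hval : (e1 : G) * z1 = (e2 : G) * z2 := congrArg Subtype.val hp
        have hw : (e2 : G)⁻¹ * e1 = (z2 : G) * (z1 : G)⁻¹ := by
          calc (e2:G)⁻¹ * e1 = (e2:G)⁻¹ * ((e1:G) * z1) * (z1:G)⁻¹ := by group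
            _ = (e2:G)⁻¹ * ((e2:G) * z2) * (z1:G)⁻¹ := by rw [hval]
            _ = (z2:G) * (z1:G)⁻¹ := by group
        have hmem1 : (e2:G)⁻¹ * e1 ∈ E := E.mul_mem (E.inv_mem e2.2) e1.2
        have hmem2 : (e2:G)⁻¹ * e1 ∈ Subgroup.zpowers g := by
          rw [hw]; exact mul_mem z2.2 (inv_mem z1.2)
        have h1 := hEzpow _ hmem1 hmem2
        have he : (e2 : G) = e1 := inv_mul_eq_one.mp h1
        have hz : (z2 : G) = z1 := by
          rw [hw] at h1
          exact mul_inv_eq_one.mp h1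
        exact Prod.ext (Subtype.ext he.symm) (Subtype.ext hz.symm)
      · rintro ⟨x, hx⟩
        obtain ⟨e, he, k, hk⟩ := hx
        exact ⟨(⟨e, he⟩, ⟨g ^ k, Subgroup.mem_zpowers_iff.mpr ⟨k, rfl⟩⟩), Subtype.ext hk.symm⟩
    have hcc := Nat.card_congr (Equiv.ofBijective _ hf)
    rw [← hcc, Nat.card_prod, hEcard, Nat.card_zpowers, hg]
  have hHindex : H.index = 9 := by
    have h := Subgroup.card_mul_index H
    rw [hHcard, hGcard] at h
    omega
  -- involutions in H are in E
  have hinvH : ∀ x ∈ H, x * x = 1 → x ∈ E := by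
    rintro x ⟨e, he, k, rfl⟩ hx2
    have key : (e * g ^ k) * (e * g ^ k) = (e * (g ^ k * e * g ^ (-k))) * g ^ (2 * k) := by
      group
    rw [key] at hx2
    have hg2k : g ^ (2 * k) ∈ E := by
      have h1 := inv_eq_of_mul_eq_one_left hx2
      have h1' : g ^ (2 * k) = (e * (g ^ k * e * g ^ (-k)))⁻¹ := by rw [← h1, inv_inv]
      rw [h1']
      exact E.inv_mem (E.mul_mem he (hzconj k e he))
    have hg2k1 : g ^ (2 * k) = 1 := hEzpow _ hg2k ⟨2 * k, rfl⟩
    have hdvd : ((7 : ℕ) : ℤ) ∣ 2 * k := by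
      rw [← hg]
      exact orderOf_dvd_iff_zpow_eq_one.mpr hg2k1
    have h7k : (7 : ℤ) ∣ k := by
      have : (7:ℤ) ∣ 2 * k := by exact_mod_cast hdvd
      omega
    obtain ⟨m, rfl⟩ := h7k
    have hgk1 : g ^ (7 * m) = 1 := by
      rw [zpow_mul, hgpow7, one_zpow]
    rw [hgk1, mul_one]
    exact he
  have htE : t ∉ E := by
    intro htE'
    have h1 : g * t * g⁻¹ ∈ E := hnorm t htE'
    have hg' : g⁻¹ = t * g * t := by rw [← hinv, htinv]
    have h2 : g * t * g⁻¹ = g * g * t := by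
      rw [hg']
      calc g * t * (t * g * t) = g * (t * t) * (g * t) := by group
        _ = g * g * t := by rw [ht2]; group
    rw [h2] at h1
    have h3 : g * g ∈ E := by
      have h4 := E.mul_mem h1 (E.inv_mem htE')
      have h5 : g * g * t * t⁻¹ = g * g := by group
      rwa [h5] at h4
    have h6 := hEzpow _ h3 ⟨2, by show g ^ (2:ℤ) = g * g; rw [zpow_two]⟩
    have h7 : g ^ (2 : ℕ) = 1 := by rw [pow_two]; exact h6
    have := orderOf_dvd_of_pow_eq_one h7
    rw [hg] at this
    norm_num at this
  have htH : t ∉ H := fun hth => htE (hinvH t hth ht2)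
  -- fixed-point-freeness for powers of g
  have hfpf' : ∀ (k : ℤ), ∀ s ∈ E, g ^ k * s * g ^ (-k) = s → g ^ k ≠ 1 → s = 1 := by
    intro k s hs hcs hk1
    have horder : orderOf (g ^ k) = 7 := by
      have hdvd : orderOf (g ^ k) ∣ 7 := hg ▸ orderOf_dvd_of_mem_zpowers ⟨k, rfl⟩
      rcases (Nat.Prime.eq_one_or_self_of_dvd (by norm_num) _ hdvd) with h | h
      · exact absurd (orderOf_eq_one_iff.mp h) hk1
      · exact h
    have hzle : Subgroup.zpowers (g ^ k) ≤ Subgroup.zpowers g :=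
      Subgroup.zpowers_le.mpr ⟨k, rfl⟩
    have hzeq : Subgroup.zpowers (g ^ k) = Subgroup.zpowers g := by
      apply Subgroup.eq_of_le_of_card_ge hzle
      rw [Nat.card_zpowers, Nat.card_zpowers, horder, hg]
    have hgmem : g ∈ Subgroup.zpowers (g ^ k) := hzeq ▸ Subgroup.mem_zpowers g
    obtain ⟨m, hm⟩ := Subgroup.mem_zpowers_iff.mp hgmem
    have hc : (MulAut.conj (g ^ k)) s = s := by
      show g ^ k * s * (g ^ k)⁻¹ = s
      rw [← zpow_neg]
      exact hcs
    have hst : MulAut.conj (g ^ k) ∈ MulAction.stabilizer (MulAut G) s := hc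
    have hstm := Subgroup.zpow_mem _ hst m
    have hcm : (MulAut.conj ((g ^ k) ^ m)) s = s := by
      rw [map_zpow]
      exact hstm
    rw [hm] at hcm
    simp only [MulAut.conj_apply] at hcm
    exact hfpf s hs hcm
  -- key TI lemma
  have hTI : ∀ s ∈ E, t * s * t⁻¹ ∈ E → s = 1 := by
    by_contra hcon
    push_neg at hcon
    obtain ⟨s, hs, hts, hs1⟩ := hcon
    haveI : Fintype E := Fintype.ofFinite E
    have hcardE : Fintype.card E = 8 := by rw [← Nat.card_eq_fintype_card, hEcard]
    have hgkne : ∀ a b : ℕ, a < 7 → b < 7 → a ≠ b → g ^ ((a:ℤ) - b) ≠ 1 := by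
      intro a b ha hb hab h1
      have h2 := orderOf_dvd_iff_zpow_eq_one.mpr h1
      rw [hg] at h2
      have h3 : (7:ℤ) ∣ (a:ℤ) - b := by exact_mod_cast h2
      omega
    set fE : Fin 8 → E := fun i =>
      if h : (i : ℕ) = 7 then 1
      else ⟨g ^ ((i:ℕ):ℤ) * s * g ^ (-((i:ℕ):ℤ)), hzconj _ s hs⟩ with hfE
    have hfE7 : ∀ i : Fin 8, (i:ℕ) = 7 → fE i = 1 := by intro i h; simp [hfE, h]
    have hfElt : ∀ i : Fin 8, (i:ℕ) ≠ 7 →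
        (fE i : G) = g ^ ((i:ℕ):ℤ) * s * g ^ (-((i:ℕ):ℤ)) := by
      intro i h; simp [hfE, h]
    have hinj : Function.Injective fE := by
      intro i j hij
      by_contra hne
      have hij' : (i:ℕ) ≠ (j:ℕ) := fun h => hne (Fin.ext h)
      have hi8 := i.isLt
      have hj8 := j.isLt
      rcases eq_or_ne (i:ℕ) 7 with h7i | h7i <;> rcases eq_or_ne (j:ℕ) 7 with h7j | h7j
      · exact hij' (by omega)
      · have h1 : (1:G) = g ^ ((j:ℕ):ℤ) * s * g ^ (-((j:ℕ):ℤ)) := by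
          rw [← hfElt j h7j, ← hij, hfE7 i h7i]; rfl
        exact hs1 (aux_conj_eq_one g _ s h1.symm)
      · have h1 : (1:G) = g ^ ((i:ℕ):ℤ) * s * g ^ (-((i:ℕ):ℤ)) := by
          rw [← hfElt i h7i, hij, hfE7 j h7j]; rfl
        exact hs1 (aux_conj_eq_one g _ s h1.symm)
      · have h1 : g ^ ((i:ℕ):ℤ) * s * g ^ (-((i:ℕ):ℤ))
            = g ^ ((j:ℕ):ℤ) * s * g ^ (-((j:ℕ):ℤ)) := by
          rw [← hfElt i h7i, ← hfElt j h7j, hij]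
        set a := ((i:ℕ):ℤ) with ha
        set b := ((j:ℕ):ℤ) with hb
        have key : g ^ (a - b) * s * g ^ (-(a - b))
            = g ^ (-b) * (g ^ a * s * g ^ (-a)) * g ^ b := by group
        rw [h1] at key
        have key2 : g ^ (-b) * (g ^ b * s * g ^ (-b)) * g ^ b = s := by group
        rw [key2] at key
        exact hs1 (hfpf' (a - b) s hs key (hgkne _ _ (by omega) (by omega) hij'))
    have hsurj : Function.Surjective fE :=
      ((Fintype.bijective_iff_injective_and_card fE).mpr ⟨hinj, by simp [hcardE]⟩).2
    have hconjg : (MulAut.conj t) g = g⁻¹ := hinv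
    have htg : ∀ c : ℤ, t * g ^ c * t⁻¹ = g ^ (-c) := by
      intro c
      have h1 : (MulAut.conj t) (g ^ c) = ((MulAut.conj t) g) ^ c := map_zpow _ _ _
      rw [hconjg] at h1
      have h2 : t * g ^ c * t⁻¹ = (g⁻¹) ^ c := h1
      rw [h2, inv_zpow, ← zpow_neg]
    have hstep : ∀ x ∈ E, t * x * t⁻¹ ∈ E := by
      intro x hx
      obtain ⟨i, hi⟩ := hsurj ⟨x, hx⟩
      by_cases h7 : (i:ℕ) = 7
      · have hx1 : x = 1 := by
          have h9 := (hfE7 i h7).symm.trans hi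
          exact (congrArg Subtype.val h9).symm
        rw [hx1, mul_one, mul_inv_cancel]
        exact E.one_mem
      · have hxv : x = g ^ ((i:ℕ):ℤ) * s * g ^ (-((i:ℕ):ℤ)) := by
          rw [← hfElt i h7, hi]
        set a := ((i:ℕ):ℤ) with ha
        have heq : t * x * t⁻¹ = g ^ (-a) * (t * s * t⁻¹) * g ^ (-(-a)) := by
          rw [hxv]
          calc t * (g ^ a * s * g ^ (-a)) * t⁻¹
              = (t * g ^ a * t⁻¹) * (t * s * t⁻¹) * (t * g ^ (-a) * t⁻¹) := by group
            _ = g ^ (-a) * (t * s * t⁻¹) * g ^ (-(-a)) := by rw [htg, htg]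
        rw [heq]
        exact hzconj (-a) _ hts
    have htnorm : t ∈ Subgroup.normalizer (E : Set G) := aux_mem_normalizer E t hstep
    have hclos : Subgroup.closure ((E : Set G) ∪ {g, t}) ≤ Subgroup.normalizer (E : Set G) := by
      rw [Subgroup.closure_le]
      rintro x (hx | hx)
      · exact Subgroup.le_normalizer hx
      · simp only [Set.mem_insert_iff, Set.mem_singleton_iff] at hx
        rcases hx with rfl | rfl
        · exact hgnorm
        · exact htnorm
    have hnt : Subgroup.normalizer (E : Set G) = ⊤ := top_unique (hgen ▸ hclos)
    haveI hNorm : E.Normal := Subgroup.normalizer_eq_top_iff.mp hnt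
    have hEindex : E.index = 63 := by
      have h := Subgroup.card_mul_index E
      rw [hEcard, hGcard] at h
      omega
    have h2q : ((t : G ⧸ E)) ^ 2 = 1 := by
      rw [pow_two, ← QuotientGroup.mk_mul, ht2, QuotientGroup.mk_one]
    have d2 := orderOf_dvd_of_pow_eq_one h2q
    have d63 : orderOf ((t : G ⧸ E)) ∣ 63 := by
      have h := orderOf_dvd_natCard ((t : G ⧸ E))
      rwa [show Nat.card (G ⧸ E) = E.index from rfl, hEindex] at h
    have hd := Nat.dvd_gcd d2 d63
    norm_num at hd
    exact htE hd
  -- main construction: cosets of H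
  haveI : Fintype (G ⧸ H) := Fintype.ofFinite _
  haveI : Fintype E := Fintype.ofFinite E
  have hcardE : Fintype.card E = 8 := by rw [← Nat.card_eq_fintype_card, hEcard]
  have hcardQ : Fintype.card (G ⧸ H) = 9 := by
    rw [← Nat.card_eq_fintype_card, show Nat.card (G ⧸ H) = H.index from rfl, hHindex]
  set Fcos : Option E → G ⧸ H := fun o => Option.rec ((1 : G) : G ⧸ H)
    (fun u => (((u : G) * t : G) : G ⧸ H)) o with hFcos
  have hFnone : Fcos none = ((1 : G) : G ⧸ H) := rfl
  have hFsome : ∀ u : E, Fcos (some u) = (((u : G) * t : G) : G ⧸ H) := fun _ => rfl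
  have hmulH : ∀ u : E, (u : G) * t ∉ H := by
    intro u hmem
    have : (t : G) = (u:G)⁻¹ * ((u:G) * t) := by group
    rw [this] at htH
    exact htH (H.mul_mem (hEleH _ (E.inv_mem u.2)) hmem)
  have hFinj : Function.Injective Fcos := by
    intro o1 o2 h12
    match o1, o2 with
    | none, none => rfl
    | none, some u =>
      exfalso
      have h13 : ((1:G) : G ⧸ H) = (((u:G) * t : G) : G ⧸ H) := h12
      rw [QuotientGroup.eq] at h13
      simp only [inv_one, one_mul] at h13
      exact hmulH u h13
    | some u, none =>
      exfalso
      have h13 : ((1:G) : G ⧸ H) = (((u:G) * t : G) : G ⧸ H) := h12.symm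
      rw [QuotientGroup.eq] at h13
      simp only [inv_one, one_mul] at h13
      exact hmulH u h13
    | some u, some v =>
      have h13 : (((u:G) * t : G) : G ⧸ H) = (((v:G) * t : G) : G ⧸ H) := h12
      rw [QuotientGroup.eq] at h13
      have hval : ((u:G) * t)⁻¹ * ((v:G) * t) = t * ((u:G)⁻¹ * v) * t⁻¹ := by
        simp only [mul_inv_rev, htinv]
        group
      rw [hval] at h13
      have hwE : (u:G)⁻¹ * v ∈ E := E.mul_mem (E.inv_mem u.2) v.2
      have hw2 : (t * ((u:G)⁻¹ * v) * t⁻¹) * (t * ((u:G)⁻¹ * v) * t⁻¹) = 1 := by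
        have hq : (t * ((u:G)⁻¹ * v) * t⁻¹) * (t * ((u:G)⁻¹ * v) * t⁻¹)
            = t * (((u:G)⁻¹ * v) * ((u:G)⁻¹ * v)) * t⁻¹ := by group
        rw [hq, hEelem _ hwE, mul_one, mul_inv_cancel]
      have hwe := hinvH _ h13 hw2
      have hw1 := hTI _ hwE hwe
      have huv : (u:G) = v := inv_mul_eq_one.mp hw1
      exact congrArg some (Subtype.ext huv)
  have hFsurj : Function.Surjective Fcos := by
    refine ((Fintype.bijective_iff_injective_and_card Fcos).mpr ⟨hFinj, ?_⟩).2
    simp [hcardQ, hcardE]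
  -- fixed point of t on the coset space
  haveI : Fact (Nat.Prime 2) := ⟨by norm_num⟩
  have hordt : orderOf t = 2 := orderOf_eq_prime (by rw [pow_two]; exact ht2) ht1
  have hP : IsPGroup 2 (Subgroup.zpowers t) :=
    IsPGroup.of_card (by rw [Nat.card_zpowers, hordt, pow_one])
  have hmod := hP.card_modEq_card_fixedPoints (G ⧸ H)
  rw [show Nat.card (G ⧸ H) = H.index from rfl, hHindex] at hmod
  have hfpne : Nonempty (MulAction.fixedPoints (Subgroup.zpowers t) (G ⧸ H)) := by
    by_contra hempty
    rw [not_nonempty_iff] at hempty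
    have h0 : Nat.card (MulAction.fixedPoints (Subgroup.zpowers t) (G ⧸ H)) = 0 :=
      Nat.card_of_isEmpty
    rw [h0] at hmod
    norm_num [Nat.ModEq] at hmod
  obtain ⟨⟨ω, hω⟩⟩ := hfpne
  have htω : (t : G) • ω = ω := hω ⟨t, Subgroup.mem_zpowers t⟩
  obtain ⟨o, ho⟩ := hFsurj ω
  match o with
  | none =>
    exfalso
    rw [hFnone] at ho
    rw [← ho] at htω
    rw [MulAction.Quotient.smul_coe] at htω
    rw [QuotientGroup.eq] at htω
    simp only [smul_eq_mul, mul_one] at htω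
    exact htH (by simpa using H.inv_mem htω)
  | some u =>
    rw [hFsome u] at ho
    rw [← ho] at htω
    rw [MulAction.Quotient.smul_coe] at htω
    rw [QuotientGroup.eq] at htω
    simp only [smul_eq_mul] at htω
    -- htω : (t * ((u:G) * t))⁻¹ * ((u:G) * t) ∈ H
    have hval : (t * ((u:G) * t))⁻¹ * ((u:G) * t) = t * u * t * u * t := by
      simp only [mul_inv_rev, htinv, hEinv _ u.2]
      group
    rw [hval] at htω
    have hh2 : (t * (u:G) * t * u * t) * (t * (u:G) * t * u * t) = 1 := by
      have cancel : ∀ (c : G), c * c = 1 → ∀ y, c * (c * y) = y := fun c hc y => by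
        rw [← mul_assoc, hc, one_mul]
      simp only [mul_assoc]
      rw [cancel t ht2, cancel (u:G) (hEelem _ u.2), cancel t ht2, cancel (u:G) (hEelem _ u.2),
        ht2]
    have hhE : t * (u:G) * t * u * t ∈ E := hinvH _ htω hh2
    have hu1 : (u:G) ≠ 1 := by
      intro hu'
      rw [hu'] at hhE
      simp only [mul_one] at hhE
      rw [mul_assoc, ht2, mul_one] at hhE
      exact htE hhE
    set x : G := (u:G) * t with hx
    have hx3 : x ^ 3 = (u:G) * (t * (u:G) * t * u * t) := by
      rw [hx, pow_succ, pow_succ, pow_one]; group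
    have hebigE : x ^ 3 ∈ E := by rw [hx3]; exact E.mul_mem u.2 hhE
    obtain ⟨e3, he3⟩ : ∃ e3, e3 = x ^ 3 := ⟨_, rfl⟩
    have he3E : e3 ∈ E := he3 ▸ hebigE
    have h6 : x * e3 = e3 * x := by rw [he3, ← pow_succ', ← pow_succ]
    have h5 : t * e3 * t⁻¹ = (u:G)⁻¹ * e3 * u := by
      calc t * e3 * t⁻¹ = (u:G)⁻¹ * (x * e3) * t⁻¹ := by rw [hx]; group
        _ = (u:G)⁻¹ * (e3 * x) * t⁻¹ := by rw [h6]
        _ = (u:G)⁻¹ * e3 * (u:G) * (t * t⁻¹) := by rw [hx]; group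
        _ = (u:G)⁻¹ * e3 * u := by rw [mul_inv_cancel, mul_one]
    have h7 : (u:G)⁻¹ * e3 * u = e3 := by
      rw [hEinv _ u.2]
      rw [hEcomm _ u.2 _ he3E, mul_assoc, hEelem _ u.2, mul_one]
    have h8 : t * e3 * t⁻¹ ∈ E := by rw [h5, h7]; exact he3E
    have hx31 : x ^ 3 = 1 := by rw [← he3]; exact hTI _ he3E h8
    have hxne : x ≠ 1 := by
      intro hx1
      rw [hx] at hx1
      have ht' : t = (u:G)⁻¹ := eq_inv_of_mul_eq_one_right hx1
      rw [hEinv _ u.2] at ht'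
      exact htE (ht' ▸ u.2)
    haveI : Fact (Nat.Prime 3) := ⟨by norm_num⟩
    have hord3 : orderOf x = 3 := orderOf_eq_prime hx31 hxne
    exact ⟨u, u.2, hu1, hEelem _ u.2, hord3⟩

theorem psl28_amalgam_condition
    (G : Type*) [Group G] (E : Subgroup G) (g t : G)
    (hEcard : Nat.card E = 8)
    (hEelem : ∀ x ∈ E, x * x = 1)
    (hg : orderOf g = 7)
    (hnorm : ∀ x ∈ E, g * x * g⁻¹ ∈ E)
    (hfpf : ∀ x ∈ E, g * x * g⁻¹ = x → x = 1)
    (ht2 : t * t = 1) (ht1 : t ≠ 1)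
    (hinv : t * g * t⁻¹ = g⁻¹)
    (hgen : Subgroup.closure ((E : Set G) ∪ {g, t}) = ⊤)
    (hiso : Nonempty (G ≃* Matrix.ProjectiveSpecialLinearGroup (Fin 2) (GaloisField 2 3))) :
    ∃ m ∈ E, m ≠ 1 ∧ m * m = 1 ∧ orderOf (m * t) = 3 := by
  obtain ⟨iso⟩ := hiso
  have hGcard : Nat.card G = 504 := by
    rw [Nat.card_congr iso.toEquiv]
    exact card_PSL28
  exact abstract_main G E g t hEcard hEelem hg hnorm hfpf ht2 ht1 hinv hgen hGcard
end
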